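/- Let K_n be the complete graph on n ≥ 1 vertices. Then MH^k_ℓ(K_n) = 0 whenever k ≠ ℓ, and the magnitude cohomology ring MH^*_*(K_n) is isomorphic as a graded ring to the ℤ-algebra with basis all finite sequences (x_0,…,x_k) of vertices of K_n (k ≥ 0) with consecutive entries distinct, graded by k, with product given by concatenation: (x_0,…,x_k)·(y_0,…,y_l) = (x_0,…,x_k,y_1,…,y_l) if x_k = y_0 and 0 otherwise. -/

import Mathlib

/-! Core definitions: magnitude (co)homology of generalised metric spaces. -/

open scoped ENNReal NNReal Classical
noncomputable section

/-- A generalised metric space (extended pseudo-quasi-metric space):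
a set with a distance in `[0,∞]` satisfying `d x x = 0` and the triangle
inequality, but not necessarily symmetry or separation. -/
structure GMS (X : Type*) where
  d : X → X → ℝ≥0∞
  d_self : ∀ x, d x x = 0
  d_triangle : ∀ x y z, d x z ≤ d x y + d y z

variable {X : Type*}

/-- An extended quasi-metric space: distinct points are at nonzero distance. -/
def GMS.Quasi (M : GMS X) : Prop := ∀ x y, M.d x y = 0 → x = y

/-- Consecutive entries of the tuple are distinct, i.e. it is a simplex. -/
def SepTuple {k : ℕ} (x : Fin (k + 1) → X) : Prop :=
  ∀ i : Fin k, x i.castSucc ≠ x i.succ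

/-- The length of a tuple: the sum of consecutive distances. -/
def GMS.len (M : GMS X) {k : ℕ} (x : Fin (k + 1) → X) : ℝ≥0∞ :=
  ∑ i : Fin k, M.d (x i.castSucc) (x i.succ)

/-- A `k`-simplex of length `ℓ` in the generalised metric space `M`. -/
structure MSimplex (M : GMS X) (k : ℕ) (ℓ : ℝ≥0) where
  pts : Fin (k + 1) → X
  sep : SepTuple pts
  len_eq : M.len pts = (ℓ : ℝ≥0∞)

/-- The magnitude chain group `MC_{k,ℓ}`: the free abelian group on the
`k`-simplices of length `ℓ`. -/
abbrev MC (M : GMS X) (k : ℕ) (ℓ : ℝ≥0) := MSimplex M k ℓ →₀ ℤ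

/-- The magnitude cochain group `MC^k_ℓ = Hom(MC_{k,ℓ}, ℤ)`, identified with
the group of all `ℤ`-valued functions on `k`-simplices of length `ℓ`. -/
abbrev MCo (M : GMS X) (k : ℕ) (ℓ : ℝ≥0) := MSimplex M k ℓ → ℤ

/-- Remove the `(j+1)`-st point (an inner point) from a tuple. -/
def faceTuple {k : ℕ} (x : Fin (k + 2) → X) (j : Fin k) : Fin (k + 1) → X :=
  x ∘ Fin.succAbove ⟨j.val + 1, by have := j.isLt; omega⟩

/-- The condition under which the inner face `∂_{j+1}` of a simplex is a simplex
of the same length: the removed point lies on a geodesic between its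
neighbours (and, redundantly in quasi-metric spaces, the face is again a
simplex of the same length). -/
def GMS.FaceOK (M : GMS X) {k : ℕ} {ℓ : ℝ≥0} (s : MSimplex M (k + 1) ℓ) (j : Fin k) : Prop :=
  M.d (s.pts ⟨j.val, by have := j.isLt; omega⟩) (s.pts ⟨j.val + 2, by have := j.isLt; omega⟩) =
      M.d (s.pts ⟨j.val, by have := j.isLt; omega⟩) (s.pts ⟨j.val + 1, by have := j.isLt; omega⟩) +
      M.d (s.pts ⟨j.val + 1, by have := j.isLt; omega⟩) (s.pts ⟨j.val + 2, by have := j.isLt; omega⟩)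
    ∧ SepTuple (faceTuple s.pts j) ∧ M.len (faceTuple s.pts j) = (ℓ : ℝ≥0∞)

/-- The inner face `∂_{j+1}` of a simplex, when defined. -/
def GMS.face (M : GMS X) {k : ℕ} {ℓ : ℝ≥0} (s : MSimplex M (k + 1) ℓ) (j : Fin k)
    (h : M.FaceOK s j) : MSimplex M k ℓ :=
  ⟨faceTuple s.pts j, h.2.1, h.2.2⟩

/-- The magnitude coboundary `∂^* : MC^k_ℓ → MC^{k+1}_ℓ`, dual to the
differential `∂ = -∂_1 + ∂_2 - ⋯ + (-1)^k ∂_k`. -/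
def MCoDelta (M : GMS X) (k : ℕ) (ℓ : ℝ≥0) : MCo M k ℓ →ₗ[ℤ] MCo M (k + 1) ℓ where
  toFun φ := fun s => ∑ j : Fin k, (-1 : ℤ) ^ (j.val + 1) *
      (if h : M.FaceOK s j then φ (M.face s j h) else 0)
  map_add' φ ψ := by
    funext s
    simp only [Pi.add_apply]
    rw [← Finset.sum_add_distrib]
    refine Finset.sum_congr rfl fun j _ => ?_
    split <;> ring
  map_smul' z φ := by
    funext s
    simp only [Pi.smul_apply, smul_eq_mul, RingHom.id_apply]
    rw [Finset.mul_sum]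
    refine Finset.sum_congr rfl fun j _ => ?_
    split <;> ring

/-- Magnitude cocycles in bidegree `(k, ℓ)`. -/
def MCocycle (M : GMS X) (k : ℕ) (ℓ : ℝ≥0) : Submodule ℤ (MCo M k ℓ) :=
  LinearMap.ker (MCoDelta M k ℓ)

/-- Magnitude coboundaries in bidegree `(k, ℓ)` (zero in degree `0`). -/
def MCobound (M : GMS X) : (k : ℕ) → (ℓ : ℝ≥0) → Submodule ℤ (MCo M k ℓ)
  | 0, _ => ⊥
  | (k + 1), ℓ => LinearMap.range (MCoDelta M k ℓ)

/-- The magnitude cohomology group `MH^k_ℓ(X)`: cocycles modulo coboundaries. -/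
abbrev MagCohomology (M : GMS X) (k : ℕ) (ℓ : ℝ≥0) :=
  MCocycle M k ℓ ⧸ (MCobound M k ℓ).comap (MCocycle M k ℓ).subtype

/-- The cohomology class of a cochain (zero if it is not a cocycle). -/
def cohClass (M : GMS X) {k : ℕ} {ℓ : ℝ≥0} (φ : MCo M k ℓ) : MagCohomology M k ℓ :=
  if h : φ ∈ MCocycle M k ℓ then Submodule.Quotient.mk ⟨φ, h⟩ else 0

/-- A representative cocycle of a magnitude cohomology class. -/
def MHout (M : GMS X) {k : ℕ} {ℓ : ℝ≥0} (α : MagCohomology M k ℓ) : MCo M k ℓ :=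
  ((Submodule.Quotient.mk_surjective _) α).choose.val

/-- The first `j+1` points of a `(j+k)`-simplex. -/
def frontT (j k : ℕ) (x : Fin (j + k + 1) → X) : Fin (j + 1) → X :=
  fun i => x ⟨i.val, by have := i.isLt; omega⟩

/-- The last `k+1` points of a `(j+k)`-simplex. -/
def backT (j k : ℕ) (x : Fin (j + k + 1) → X) : Fin (k + 1) → X :=
  fun i => x ⟨j + i.val, by have := i.isLt; omega⟩

lemma SepTuple.front {j k : ℕ} {x : Fin (j + k + 1) → X} (h : SepTuple x) :
    SepTuple (frontT j k x) := by
  intro i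
  have hi := i.isLt
  exact h ⟨i.val, by omega⟩

lemma SepTuple.back {j k : ℕ} {x : Fin (j + k + 1) → X} (h : SepTuple x) :
    SepTuple (backT j k x) := by
  intro i
  have hi := i.isLt
  exact h ⟨j + i.val, by omega⟩

/-- The product of magnitude cochains:
`(φ·ψ)(x_0,…,x_{j+k}) = φ(x_0,…,x_j) · ψ(x_j,…,x_{j+k})`,
where a cochain of length-degree `ℓ` vanishes on simplices of other lengths. -/
def MCup (M : GMS X) {j k : ℕ} {ℓ m : ℝ≥0} (φ : MCo M j ℓ) (ψ : MCo M k m) :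
    MCo M (j + k) (ℓ + m) :=
  fun s =>
    if h : M.len (frontT j k s.pts) = (ℓ : ℝ≥0∞) ∧ M.len (backT j k s.pts) = (m : ℝ≥0∞) then
      φ ⟨frontT j k s.pts, s.sep.front, h.1⟩ * ψ ⟨backT j k s.pts, s.sep.back, h.2⟩
    else 0

/-- The unit cochain `u ∈ MC^0_0`, with `u(x_0) = 1`. -/
def MCoUnit (M : GMS X) : MCo M 0 0 := fun _ => 1

/-- Transport of magnitude cohomology classes along equalities of bidegrees. -/
def MHcast (M : GMS X) {k k' : ℕ} {ℓ ℓ' : ℝ≥0} (hk : k = k') (hl : ℓ = ℓ')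
    (α : MagCohomology M k ℓ) : MagCohomology M k' ℓ' := hk ▸ hl ▸ α

/-- Transport of magnitude cochains along equalities of bidegrees. -/
def MCoCast (M : GMS X) {k k' : ℕ} {ℓ ℓ' : ℝ≥0} (hk : k = k') (hl : ℓ = ℓ')
    (φ : MCo M k ℓ) : MCo M k' ℓ' := hk ▸ hl ▸ φ

/-- The product on magnitude cohomology induced by the product of cochains. -/
def MHmul (M : GMS X) {j k : ℕ} {ℓ m : ℝ≥0} (α : MagCohomology M j ℓ)
    (β : MagCohomology M k m) : MagCohomology M (j + k) (ℓ + m) :=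
  cohClass M (MCup M (MHout M α) (MHout M β))

/-- The unit of the magnitude cohomology ring. -/
def MHone (M : GMS X) : MagCohomology M 0 0 := cohClass M (MCoUnit M)

/-- Two points are adjacent: their distance is nonzero and finite, and no
third point lies strictly between them. -/
def GMS.Adjacent (M : GMS X) (x y : X) : Prop :=
  M.d x y ≠ 0 ∧ M.d x y ≠ ∞ ∧ ∀ a, M.d x y = M.d x a + M.d a y → a = x ∨ a = y

/-- An isomorphism of magnitude cohomology rings: a family of additive
isomorphisms respecting both gradings, the product, and the unit. -/
def MHRingIso {Y : Type*} (M : GMS X) (M' : GMS Y) : Prop :=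
  ∃ e : ∀ (k : ℕ) (ℓ : ℝ≥0), MagCohomology M k ℓ ≃+ MagCohomology M' k ℓ,
    (e 0 0 (MHone M) = MHone M') ∧
    ∀ (j k : ℕ) (ℓ m : ℝ≥0) (α : MagCohomology M j ℓ) (β : MagCohomology M k m),
      e (j + k) (ℓ + m) (MHmul M α β) = MHmul M' (e j ℓ α) (e k m β)


/-- A (simple, undirected) graph regarded as a generalised metric space via
the shortest-path metric on its vertex set (`d(x,y) = ∞` for vertices in
different components). -/
def SimpleGraph.toGMS {V : Type*} (G : SimpleGraph V) : GMS V where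
  d x y := (G.edist x y : ℝ≥0∞)
  d_self x := by simp [SimpleGraph.edist_self]
  d_triangle x y z := by
    rw [← ENat.toENNReal_add]
    exact ENat.toENNReal_le.mpr (G.edist_triangle)

section Glue
variable {V : Type*}

/-- Concatenation of two tuples overlapping in one point. -/
def glueT (j k : ℕ) (x : Fin (j + 1) → V) (y : Fin (k + 1) → V) : Fin (j + k + 1) → V :=
  fun i => if h : i.val ≤ j then x ⟨i.val, by omega⟩
    else y ⟨i.val - j, by have := i.isLt; omega⟩

lemma glue_rel {j k : ℕ} {R : V → V → Prop} {x : Fin (j + 1) → V} {y : Fin (k + 1) → V}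
    (hx : ∀ i : Fin j, R (x i.castSucc) (x i.succ))
    (hy : ∀ i : Fin k, R (y i.castSucc) (y i.succ))
    (hmatch : x (Fin.last j) = y 0) :
    ∀ i : Fin (j + k), R (glueT j k x y i.castSucc) (glueT j k x y i.succ) := by
  intro i
  have hi := i.isLt
  simp only [glueT, Fin.coe_castSucc, Fin.val_succ]
  by_cases h1 : i.val + 1 ≤ j
  · rw [dif_pos (by omega : i.val ≤ j), dif_pos h1]
    exact hx ⟨i.val, by omega⟩
  · by_cases h0 : i.val ≤ j
    · have hij : i.val = j := by omega
      rw [dif_pos h0, dif_neg h1]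
      have e1 : (⟨i.val, by omega⟩ : Fin (j + 1)) = Fin.last j := by
        apply Fin.ext; simpa using hij
      have e2 : (⟨i.val + 1 - j, by omega⟩ : Fin (k + 1)) =
          (⟨0, by omega⟩ : Fin k).succ := by
        apply Fin.ext; simp; omega
      rw [e1, hmatch, e2]
      have e3 : (0 : Fin (k + 1)) = (⟨0, by omega⟩ : Fin k).castSucc := by
        apply Fin.ext; simp
      rw [e3]
      exact hy ⟨0, by omega⟩
    · rw [dif_neg h0, dif_neg (by omega)]
      have e1 : (⟨i.val - j, by omega⟩ : Fin (k + 1)) =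
          (⟨i.val - j, by omega⟩ : Fin k).castSucc := by
        apply Fin.ext; simp
      have e2 : (⟨i.val + 1 - j, by omega⟩ : Fin (k + 1)) =
          (⟨i.val - j, by omega⟩ : Fin k).succ := by
        apply Fin.ext; simp; omega
      rw [e1, e2]
      exact hy _

end Glue

section PathAlgebra
variable {V : Type*} [Fintype V] [DecidableEq V]

/-- An edge path of length `k` in a graph: a sequence of vertices in which
each consecutive pair spans an edge. -/
structure EdgePath (G : SimpleGraph V) (k : ℕ) where
  pts : Fin (k + 1) → V
  adj : ∀ i : Fin k, G.Adj (pts i.castSucc) (pts i.succ)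

instance {G : SimpleGraph V} {k : ℕ} : Fintype (EdgePath G k) :=
  Fintype.ofInjective (fun p => p.pts) (by
    intro p q h; cases p; cases q; simpa using h)

/-- The degree-`k` component of the path algebra of `G`: the free abelian
group on edge paths of length `k`. -/
abbrev PathAlgComp (G : SimpleGraph V) (k : ℕ) := EdgePath G k →₀ ℤ

/-- Concatenation of edge paths sharing an endpoint. -/
def pconcat {G : SimpleGraph V} {j k : ℕ} (p : EdgePath G j) (q : EdgePath G k)
    (h : p.pts (Fin.last j) = q.pts 0) : EdgePath G (j + k) :=
  ⟨glueT j k p.pts q.pts, glue_rel p.adj q.adj h⟩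

/-- The product of the path algebra: bilinear extension of concatenation
(zero when endpoints do not match). -/
def pmul {G : SimpleGraph V} {j k : ℕ} (a : PathAlgComp G j) (b : PathAlgComp G k) :
    PathAlgComp G (j + k) :=
  a.sum fun p zp => b.sum fun q zq =>
    if h : p.pts (Fin.last j) = q.pts 0 then Finsupp.single (pconcat p q h) (zp * zq)
    else 0

/-- Transport of path algebra elements along equalities of degrees. -/
def pcast {G : SimpleGraph V} {j j' : ℕ} (h : j = j') (a : PathAlgComp G j) :
    PathAlgComp G j' := h ▸ a

/-- The trivial edge path at a vertex. -/
def trivPath (G : SimpleGraph V) (v : V) : EdgePath G 0 :=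
  ⟨fun _ => v, fun i => i.elim0⟩

/-- The relation element `Σ_{y : x ∼ y ∼ z} xyz` of the path algebra,
for a pair of vertices `x, z` (at distance 2). -/
def relElt (G : SimpleGraph V) (x z : V) : PathAlgComp G 2 :=
  ∑ p ∈ Finset.univ.filter (fun p : EdgePath G 2 => p.pts 0 = x ∧ p.pts 2 = z),
    Finsupp.single p (1 : ℤ)

/-- The degree-`k` part of the two-sided ideal of the path algebra generated
by the elements `Σ_{y : x ∼ y ∼ z} xyz` over pairs `x, z` with `d(x,z) = 2`. -/
def RelIdealComp (G : SimpleGraph V) (k : ℕ) : Submodule ℤ (PathAlgComp G k) :=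
  Submodule.span ℤ {w | ∃ (a b : ℕ) (h : a + 2 + b = k) (p : EdgePath G a) (x z : V)
    (_ : G.edist x z = 2) (q : EdgePath G b),
      w = pcast h (pmul (pmul (Finsupp.single p (1 : ℤ)) (relElt G x z))
        (Finsupp.single q (1 : ℤ)))}

/-- The degree-`k` component of the quotient of the path algebra of `G` by the
ideal generated by the elements `Σ_{y : x ∼ y ∼ z} xyz`. -/
abbrev PathQuot (G : SimpleGraph V) (k : ℕ) := PathAlgComp G k ⧸ RelIdealComp G k

/-- A representative of a class in the quotient of the path algebra. -/
def pqout {G : SimpleGraph V} {k : ℕ} (u : PathQuot G k) : PathAlgComp G k :=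
  ((Submodule.Quotient.mk_surjective _) u).choose

/-- The product on the quotient of the path algebra. -/
def pqmul {G : SimpleGraph V} {j k : ℕ} (u : PathQuot G j) (v : PathQuot G k) :
    PathQuot G (j + k) :=
  Submodule.Quotient.mk (pmul (pqout u) (pqout v))

end PathAlgebra


section CompleteGraph
variable {V : Type*}

/-- The free abelian group on sequences of `k+1` vertices with consecutive
entries distinct. -/
abbrev SeqComp (V : Type*) (k : ℕ) := {x : Fin (k + 1) → V // SepTuple x} →₀ ℤ

/-- Concatenation product on sequences with consecutive entries distinct:
`(x_0,…,x_j)·(y_0,…,y_l) = (x_0,…,x_j,y_1,…,y_l)` if `x_j = y_0`, else `0`. -/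
def seqMul {j k : ℕ} (a : SeqComp V j) (b : SeqComp V k) : SeqComp V (j + k) :=
  a.sum fun p zp => b.sum fun q zq =>
    if h : p.val (Fin.last j) = q.val 0 then
      Finsupp.single ⟨glueT j k p.val q.val, glue_rel p.prop q.prop h⟩ (zp * zq)
    else 0


section CGAux
variable [Fintype V] [DecidableEq V]


lemma MK_d_ne {x y : V} (h : x ≠ y) : (⊤ : SimpleGraph V).toGMS.d x y = 1 := by
  show ((⊤ : SimpleGraph V).edist x y : ℝ≥0∞) = 1
  rw [SimpleGraph.edist_eq_one_iff_adj.mpr (by simpa using h)]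
  simp

lemma MK_len_sep {k : ℕ} {x : Fin (k + 1) → V} (h : SepTuple x) :
    (⊤ : SimpleGraph V).toGMS.len x = (k : ℝ≥0∞) := by
  unfold GMS.len
  rw [Finset.sum_congr rfl (fun i _ => MK_d_ne (h i))]
  simp

lemma MK_ell {k : ℕ} {ℓ : ℝ≥0} (s : MSimplex (⊤ : SimpleGraph V).toGMS k ℓ) : ℓ = (k : ℝ≥0) := by
  have h := s.len_eq
  rw [MK_len_sep s.sep] at h
  exact_mod_cast h.symm

lemma MK_isEmpty {k : ℕ} {ℓ : ℝ≥0} (h : (k : ℝ≥0) ≠ ℓ) : IsEmpty (MSimplex (⊤ : SimpleGraph V).toGMS k ℓ) :=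
  ⟨fun s => h (MK_ell s).symm⟩

lemma MK_faceok_false {k : ℕ} {ℓ : ℝ≥0} (s : MSimplex (⊤ : SimpleGraph V).toGMS (k + 1) ℓ) (j : Fin k) :
    ¬ (⊤ : SimpleGraph V).toGMS.FaceOK s j := by
  intro h
  have h1 := MK_ell s
  have h2 := h.2.2
  rw [MK_len_sep h.2.1, h1] at h2
  have : (k : ℕ) = k + 1 := by exact_mod_cast h2
  omega

lemma MK_delta_zero (k : ℕ) (ℓ : ℝ≥0) (φ : MCo (⊤ : SimpleGraph V).toGMS k ℓ) : MCoDelta (⊤ : SimpleGraph V).toGMS k ℓ φ = 0 := by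
  funext s
  show (∑ j : Fin k, (-1 : ℤ) ^ (j.val + 1) *
      (if h : (⊤ : SimpleGraph V).toGMS.FaceOK s j then
        φ ((⊤ : SimpleGraph V).toGMS.face s j h) else 0)) = 0
  refine Finset.sum_eq_zero fun j _ => ?_
  rw [dif_neg (MK_faceok_false s j), mul_zero]

lemma MK_mem_cocycle {k : ℕ} {ℓ : ℝ≥0} (φ : MCo (⊤ : SimpleGraph V).toGMS k ℓ) : φ ∈ MCocycle (⊤ : SimpleGraph V).toGMS k ℓ :=
  LinearMap.mem_ker.mpr (MK_delta_zero k ℓ φ)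

lemma MK_cobound_bot (k : ℕ) (ℓ : ℝ≥0) : MCobound (⊤ : SimpleGraph V).toGMS k ℓ = ⊥ := by
  cases k with
  | zero => rfl
  | succ k =>
    refine le_bot_iff.mp ?_
    have he : MCobound (⊤ : SimpleGraph V).toGMS (k + 1) ℓ = LinearMap.range (MCoDelta (⊤ : SimpleGraph V).toGMS k ℓ) := rfl
    rw [he]
    rintro ψ ⟨φ, rfl⟩
    simp [Submodule.mem_bot, MK_delta_zero k ℓ φ]

/-- The cochain group as a finsupp on separated tuples. -/
def toSeqF {k : ℕ} {ℓ : ℝ≥0} (φ : MCo (⊤ : SimpleGraph V).toGMS k ℓ) : SeqComp V k :=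
  Finsupp.equivFunOnFinite.symm fun x =>
    if h : (⊤ : SimpleGraph V).toGMS.len x.1 = (ℓ : ℝ≥0∞) then φ ⟨x.1, x.2, h⟩ else 0

lemma toSeqF_apply {k : ℕ} {ℓ : ℝ≥0} (φ : MCo (⊤ : SimpleGraph V).toGMS k ℓ)
    (x : {x : Fin (k + 1) → V // SepTuple x}) :
    toSeqF φ x =
      if h : (⊤ : SimpleGraph V).toGMS.len x.1 = (ℓ : ℝ≥0∞) then φ ⟨x.1, x.2, h⟩ else 0 :=
  rfl

lemma MK_len_sep' {k : ℕ} {x : Fin (k + 1) → V} (h : SepTuple x) :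
    (⊤ : SimpleGraph V).toGMS.len x = (((k : ℝ≥0)) : ℝ≥0∞) := by
  rw [MK_len_sep h]; simp

lemma toSeqF_apply_sep {k : ℕ} (φ : MCo (⊤ : SimpleGraph V).toGMS k (k : ℝ≥0))
    (x : {x : Fin (k + 1) → V // SepTuple x}) :
    toSeqF φ x = φ ⟨x.1, x.2, MK_len_sep' x.2⟩ := by
  rw [toSeqF_apply, dif_pos (MK_len_sep' x.2)]

lemma toSeqF_add {k : ℕ} {ℓ : ℝ≥0} (φ ψ : MCo (⊤ : SimpleGraph V).toGMS k ℓ) :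
    toSeqF (φ + ψ) = toSeqF φ + toSeqF ψ := by
  ext x
  rw [Finsupp.add_apply, toSeqF_apply, toSeqF_apply, toSeqF_apply]
  by_cases h : (⊤ : SimpleGraph V).toGMS.len x.1 = (ℓ : ℝ≥0∞)
  · rw [dif_pos h, dif_pos h, dif_pos h]; rfl
  · rw [dif_neg h, dif_neg h, dif_neg h]; rfl

lemma toSeqF_smul {k : ℕ} {ℓ : ℝ≥0} (z : ℤ) (φ : MCo (⊤ : SimpleGraph V).toGMS k ℓ) :
    toSeqF (z • φ) = z • toSeqF φ := by
  ext x
  rw [Finsupp.smul_apply, toSeqF_apply, toSeqF_apply]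
  by_cases h : (⊤ : SimpleGraph V).toGMS.len x.1 = (ℓ : ℝ≥0∞)
  · rw [dif_pos h, dif_pos h]; rfl
  · rw [dif_neg h, dif_neg h]; simp

/-- The fundamental additive map from magnitude cohomology to sequences. -/
def fullE (k : ℕ) (ℓ : ℝ≥0) : MagCohomology (⊤ : SimpleGraph V).toGMS k ℓ →ₗ[ℤ] SeqComp V k :=
  Submodule.liftQ _
    { toFun := fun φ => toSeqF φ.1
      map_add' := fun φ ψ => toSeqF_add φ.1 ψ.1
      map_smul' := fun z φ => toSeqF_smul z φ.1 }
    (by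
      rw [MK_cobound_bot, Submodule.comap_bot, Submodule.ker_subtype]
      exact bot_le)

lemma fullE_mk {k : ℕ} {ℓ : ℝ≥0} (φ : MCo (⊤ : SimpleGraph V).toGMS k ℓ) (h : φ ∈ MCocycle (⊤ : SimpleGraph V).toGMS k ℓ) :
    fullE k ℓ (Submodule.Quotient.mk ⟨φ, h⟩) = toSeqF φ := rfl

lemma mk_MHout {k : ℕ} {ℓ : ℝ≥0} (α : MagCohomology (⊤ : SimpleGraph V).toGMS k ℓ) :
    (Submodule.Quotient.mk ⟨MHout (⊤ : SimpleGraph V).toGMS α, MK_mem_cocycle _⟩ : MagCohomology (⊤ : SimpleGraph V).toGMS k ℓ) = α := by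
  have hs := ((Submodule.Quotient.mk_surjective _) α).choose_spec
  have he : (⟨MHout (⊤ : SimpleGraph V).toGMS α, MK_mem_cocycle _⟩ : MCocycle (⊤ : SimpleGraph V).toGMS k ℓ) =
      ((Submodule.Quotient.mk_surjective _) α).choose := Subtype.ext rfl
  rw [he]
  exact hs

lemma fullE_MHout {k : ℕ} {ℓ : ℝ≥0} (α : MagCohomology (⊤ : SimpleGraph V).toGMS k ℓ) :
    fullE k ℓ α = toSeqF (MHout (⊤ : SimpleGraph V).toGMS α) := by
  conv_lhs => rw [← mk_MHout α]
  rfl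

lemma fullE_cohClass {k : ℕ} {ℓ : ℝ≥0} (φ : MCo (⊤ : SimpleGraph V).toGMS k ℓ) :
    fullE k ℓ (cohClass (⊤ : SimpleGraph V).toGMS φ) = toSeqF φ := by
  unfold cohClass
  rw [dif_pos (MK_mem_cocycle φ)]
  rfl

lemma fullE_cast {k : ℕ} {ℓ ℓ' : ℝ≥0} (h : ℓ = ℓ') (α : MagCohomology (⊤ : SimpleGraph V).toGMS k ℓ) :
    fullE k ℓ' (MHcast (⊤ : SimpleGraph V).toGMS rfl h α) = fullE k ℓ α := by
  subst h; rfl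

lemma MK_simplex_eta {k : ℕ} {ℓ : ℝ≥0} (s : MSimplex (⊤ : SimpleGraph V).toGMS k ℓ) (h1 h2) :
    (⟨s.pts, h1, h2⟩ : MSimplex (⊤ : SimpleGraph V).toGMS k ℓ) = s := by
  cases s; rfl

lemma fullE_bij (k : ℕ) : Function.Bijective (fullE (V := V) k (k : ℝ≥0)) := by
  constructor
  · intro α β h
    rw [fullE_MHout, fullE_MHout] at h
    have hv : MHout (⊤ : SimpleGraph V).toGMS α = MHout (⊤ : SimpleGraph V).toGMS β := by
      funext s
      have hx := Finsupp.ext_iff.mp h ⟨s.pts, s.sep⟩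
      rw [toSeqF_apply_sep, toSeqF_apply_sep] at hx
      exact hx
    rw [← mk_MHout α, ← mk_MHout β]
    exact congrArg _ (Subtype.ext hv)
  · intro a
    refine ⟨Submodule.Quotient.mk ⟨fun s => a ⟨s.pts, s.sep⟩, MK_mem_cocycle _⟩, ?_⟩
    rw [fullE_mk]
    ext x
    rw [toSeqF_apply_sep]

/-- Glueing the front and back of a tuple recovers the tuple. -/
lemma glue_front_back {j k : ℕ} (y : Fin (j + k + 1) → V) :
    glueT j k (frontT j k y) (backT j k y) = y := by
  funext i
  have hi := i.isLt
  simp only [glueT, frontT, backT]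
  split
  · exact congrArg y (Fin.ext rfl)
  · next hneg =>
    have h' : ¬ i.val ≤ j := hneg
    exact congrArg y (Fin.ext (show j + (i.val - j) = i.val by omega))

lemma front_glue {j k : ℕ} (p : Fin (j + 1) → V) (q : Fin (k + 1) → V) :
    frontT j k (glueT j k p q) = p := by
  funext i
  have hi := i.isLt
  simp only [frontT, glueT]
  split
  · exact congrArg p (Fin.ext rfl)
  · next hneg => exact absurd (show i.val ≤ j by omega) hneg

lemma back_glue {j k : ℕ} (p : Fin (j + 1) → V) (q : Fin (k + 1) → V)
    (h : p (Fin.last j) = q 0) : backT j k (glueT j k p q) = q := by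
  funext i
  have hi := i.isLt
  simp only [backT, glueT]
  split
  · next h0 =>
    have h0' : j + i.val ≤ j := h0
    have hi0 : i.val = 0 := by omega
    calc p ⟨j + i.val, by omega⟩
        = p (Fin.last j) := congrArg p (Fin.ext (by simp [hi0]))
      _ = q 0 := h
      _ = q i := congrArg q (Fin.ext (by simp [hi0]))
  · next h0 =>
    exact congrArg q (Fin.ext (show j + i.val - j = i.val by omega))

lemma front_back_match {j k : ℕ} (y : Fin (j + k + 1) → V) :
    frontT j k y (Fin.last j) = backT j k y 0 := by
  simp only [frontT, backT]
  exact congrArg y (Fin.ext (by simp))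

/-- Compatibility of the cup product with the concatenation product. -/
lemma toSeqF_cup {j k : ℕ} (φ : MCo (⊤ : SimpleGraph V).toGMS j (j : ℝ≥0))
    (ψ : MCo (⊤ : SimpleGraph V).toGMS k (k : ℝ≥0)) :
    toSeqF (MCup (⊤ : SimpleGraph V).toGMS φ ψ) = seqMul (toSeqF φ) (toSeqF ψ) := by
  ext x
  have hlen : (⊤ : SimpleGraph V).toGMS.len x.1 =
      ((((j : ℝ≥0) + (k : ℝ≥0) : ℝ≥0)) : ℝ≥0∞) := by
    rw [MK_len_sep x.2]; push_cast; ring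
  have hfront : (⊤ : SimpleGraph V).toGMS.len (frontT j k x.1) = ((j : ℝ≥0) : ℝ≥0∞) :=
    MK_len_sep' x.2.front
  have hback : (⊤ : SimpleGraph V).toGMS.len (backT j k x.1) = ((k : ℝ≥0) : ℝ≥0∞) :=
    MK_len_sep' x.2.back
  have hL : toSeqF (MCup (⊤ : SimpleGraph V).toGMS φ ψ) x =
      φ ⟨frontT j k x.1, x.2.front, hfront⟩ * ψ ⟨backT j k x.1, x.2.back, hback⟩ := by
    rw [toSeqF_apply, dif_pos hlen]
    exact dif_pos ⟨hfront, hback⟩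
  rw [hL]
  set p0 : {y : Fin (j + 1) → V // SepTuple y} := ⟨frontT j k x.1, x.2.front⟩
  set q0 : {y : Fin (k + 1) → V // SepTuple y} := ⟨backT j k x.1, x.2.back⟩
  have expand : seqMul (toSeqF φ) (toSeqF ψ) =
      ∑ p : {y : Fin (j + 1) → V // SepTuple y},
        ∑ q : {y : Fin (k + 1) → V // SepTuple y},
          @dite (SeqComp V (j + k)) (p.val (Fin.last j) = q.val 0)
            (Classical.propDecidable _)
            (fun h => Finsupp.single ⟨glueT j k p.val q.val, glue_rel p.prop q.prop h⟩
              (toSeqF φ p * toSeqF ψ q))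
            (fun _ => 0) := by
    unfold seqMul
    rw [Finsupp.sum_fintype]
    · exact Finset.sum_congr rfl fun p _ =>
        Finsupp.sum_fintype _ _ fun q => by split <;> simp
    · intro p
      rw [Finsupp.sum_fintype _ _ fun q => by split <;> simp]
      exact Finset.sum_eq_zero fun q _ => by split <;> simp
  rw [expand, Finsupp.finset_sum_apply]
  rw [Finset.sum_eq_single_of_mem p0 (Finset.mem_univ _) (fun p _ hp => ?_)]
  · rw [Finsupp.finset_sum_apply]
    rw [Finset.sum_eq_single_of_mem q0 (Finset.mem_univ _) (fun q _ hq => ?_)]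
    · have hc0 : p0.val (Fin.last j) = q0.val 0 := front_back_match x.1
      rw [dif_pos hc0]
      have hpt : (⟨glueT j k p0.val q0.val, glue_rel p0.prop q0.prop hc0⟩ :
          {y : Fin (j + k + 1) → V // SepTuple y}) = x := Subtype.ext (glue_front_back x.1)
      rw [hpt, Finsupp.single_eq_same, toSeqF_apply_sep, toSeqF_apply_sep]
    · by_cases hc : p0.val (Fin.last j) = q.val 0
      · rw [dif_pos hc]
        refine Finsupp.single_eq_of_ne' fun heq => hq ?_
        have hv : glueT j k p0.val q.val = x.1 := congrArg Subtype.val heq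
        refine Subtype.ext ?_
        show q.val = backT j k x.1
        rw [← hv, back_glue p0.val q.val hc]
      · rw [dif_neg hc]
        rfl
  · rw [Finsupp.finset_sum_apply]
    refine Finset.sum_eq_zero fun q _ => ?_
    by_cases hc : p.val (Fin.last j) = q.val 0
    · rw [dif_pos hc]
      refine Finsupp.single_eq_of_ne' fun heq => hp ?_
      have hv : glueT j k p.val q.val = x.1 := congrArg Subtype.val heq
      refine Subtype.ext ?_
      show p.val = frontT j k x.1
      rw [← hv, front_glue p.val q.val]
    · rw [dif_neg hc]
      rfl

lemma toSeqF_unit :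
    toSeqF (MCoUnit (⊤ : SimpleGraph V).toGMS) = ∑ v : V,
      Finsupp.single (⟨fun _ => v, fun i => i.elim0⟩ : {x : Fin 1 → V // SepTuple x}) (1 : ℤ) := by
  ext x
  have h0 : (⊤ : SimpleGraph V).toGMS.len x.1 = (((0 : ℝ≥0)) : ℝ≥0∞) := by
    simp [GMS.len]
  rw [toSeqF_apply, dif_pos h0, Finsupp.finset_sum_apply]
  rw [Finset.sum_eq_single_of_mem (x.1 0) (Finset.mem_univ _) (fun v _ hv => ?_)]
  · have hpt : (⟨fun _ => x.1 0, fun i => i.elim0⟩ : {y : Fin 1 → V // SepTuple y}) = x :=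
      Subtype.ext (funext fun i => congrArg x.1 (Subsingleton.elim 0 i))
    rw [hpt, Finsupp.single_eq_same]
    rfl
  · refine Finsupp.single_eq_of_ne' fun heq => hv ?_
    exact congrFun (congrArg Subtype.val heq) 0

end CGAux

/-- **Magnitude cohomology of complete graphs.** For the complete graph on a
nonempty finite vertex set, the magnitude cohomology vanishes off the
diagonal, and the magnitude cohomology ring is isomorphic as a graded ring to
the `ℤ`-algebra with basis all finite sequences of vertices with consecutive
entries distinct, with concatenation product. -/
theorem complete_graph_magnitude_cohomology [Fintype V] [DecidableEq V] [Nonempty V] :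
    (∀ (k : ℕ) (ℓ : ℝ≥0), (k : ℝ≥0) ≠ ℓ →
      ∀ α : MagCohomology (⊤ : SimpleGraph V).toGMS k ℓ, α = 0) ∧
    ∃ e : ∀ k : ℕ, MagCohomology (⊤ : SimpleGraph V).toGMS k (k : ℝ≥0) ≃+ SeqComp V k,
      (e 0 (MHcast (⊤ : SimpleGraph V).toGMS rfl (by norm_num)
          (MHone (⊤ : SimpleGraph V).toGMS)) =
        ∑ v : V, Finsupp.single ⟨fun _ => v, fun i => i.elim0⟩ (1 : ℤ)) ∧
      ∀ (j k : ℕ) (α : MagCohomology (⊤ : SimpleGraph V).toGMS j (j : ℝ≥0))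
        (β : MagCohomology (⊤ : SimpleGraph V).toGMS k (k : ℝ≥0)),
        e (j + k) (MHcast (⊤ : SimpleGraph V).toGMS rfl (Nat.cast_add j k).symm
            (MHmul (⊤ : SimpleGraph V).toGMS α β)) =
          seqMul (e j α) (e k β) := by
  constructor
  · intro k ℓ hk α
    have hE : IsEmpty (MSimplex (⊤ : SimpleGraph V).toGMS k ℓ) := MK_isEmpty hk
    obtain ⟨⟨φ, hφ⟩, rfl⟩ := Submodule.Quotient.mk_surjective _ α
    have hz : (⟨φ, hφ⟩ : MCocycle (⊤ : SimpleGraph V).toGMS k ℓ) = 0 :=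
      Subtype.ext (funext fun s => (hE.false s).elim)
    rw [hz, Submodule.Quotient.mk_zero]
  · refine ⟨fun k => AddEquiv.ofBijective (fullE k (k : ℝ≥0)).toAddMonoidHom (fullE_bij k),
      ?_, ?_⟩
    · show fullE 0 (((0 : ℕ)) : ℝ≥0)
        (MHcast (⊤ : SimpleGraph V).toGMS rfl (by norm_num) (MHone (⊤ : SimpleGraph V).toGMS)) = _
      rw [fullE_cast]
      unfold MHone
      rw [fullE_cohClass]
      exact toSeqF_unit
    · intro j k α β
      show fullE (j + k) (((j + k : ℕ)) : ℝ≥0)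
          (MHcast (⊤ : SimpleGraph V).toGMS rfl (Nat.cast_add j k).symm
            (MHmul (⊤ : SimpleGraph V).toGMS α β)) = _
      rw [fullE_cast]
      unfold MHmul
      rw [fullE_cohClass, toSeqF_cup, ← fullE_MHout, ← fullE_MHout]
      rfl

end CompleteGraph

end
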